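/- arXiv:0712.3274 — 7 statements merged into one kernel-verified Lean document; each statement's English description precedes it below -/
import Mathlib

section
/- The set E of matrices A = (a_ij) ∈ M₂(k) satisfying (*) is a k-subalgebra of the matrix algebra M₂(k), and the map sending a + bx ∈ k(x) (with a, b ∈ k) to the matrix with rows (a, b·c₀) and (b, a + b·c₁) is a k-algebra isomorphism from k(x) onto E. In particular, the endomorphism ring of the representation S_x is isomorphic to the field k(x). -/
open Polynomial

theorem aux_ker {k : Type*} [Field k] {A : Type*} [Ring A] [Algebra k A]
    (c₀ c₁ : k) (y : A)
    (hy2 : y ^ 2 = c₁ • y + algebraMap k A c₀)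
    (hind : ∀ a b : k, algebraMap k A a + b • y = 0 → a = 0 ∧ b = 0) :
    RingHom.ker (Polynomial.aeval y : k[X] →ₐ[k] A) =
      Ideal.span {X ^ 2 - C c₁ * X - C c₀} := by
  set q : k[X] := X ^ 2 - C c₁ * X - C c₀ with hqdef
  have hq0 : (aeval y) q = 0 := by
    simp [hqdef, hy2, Algebra.smul_def]
  have hmon : q.Monic := by
    unfold q; monicity!
  have hdeg : q.natDegree = 2 := by
    unfold q; compute_degree!
  ext p
  simp only [RingHom.mem_ker, Ideal.mem_span_singleton]
  constructor
  · intro hp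
    have hmod := Polynomial.modByMonic_add_div p q
    have h1 : (aeval y) (p %ₘ q) = 0 := by
      have : (aeval y) (p %ₘ q + q * (p /ₘ q)) = 0 := by rw [hmod]; exact hp
      simpa [hq0] using this
    have hdlt : (p %ₘ q).degree < q.degree := Polynomial.degree_modByMonic_lt p hmon
    have hdle : (p %ₘ q).degree ≤ 1 := by
      rw [Polynomial.degree_eq_natDegree hmon.ne_zero, hdeg] at hdlt
      exact Order.le_of_lt_succ (by exact_mod_cast hdlt)
    have hrep := Polynomial.eq_X_add_C_of_degree_le_one hdle
    rw [hrep] at h1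
    simp only [map_add, map_mul, aeval_C, aeval_X] at h1
    have h1' : algebraMap k A ((p %ₘ q).coeff 0) + ((p %ₘ q).coeff 1) • y = 0 := by
      rw [Algebra.smul_def]; linear_combination (norm := noncomm_ring) h1
    obtain ⟨h0, h1c⟩ := hind _ _ h1'
    have : p %ₘ q = 0 := by rw [hrep, h0, h1c]; simp
    exact (Polynomial.modByMonic_eq_zero_iff_dvd hmon).mp this
  · rintro ⟨r, rfl⟩
    simp [hq0]

theorem aux_adjoin {k : Type*} [Field k] {A : Type*} [Ring A] [Algebra k A]
    (c₀ c₁ : k) (y : A)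
    (hy2 : y ^ 2 = c₁ • y + algebraMap k A c₀) (z : A) (hz : z ∈ Algebra.adjoin k ({y} : Set A)) :
    ∃ a b : k, z = algebraMap k A a + b • y := by
  rw [Algebra.adjoin_singleton_eq_range_aeval, AlgHom.mem_range] at hz
  obtain ⟨p, rfl⟩ := hz
  set q : k[X] := X ^ 2 - C c₁ * X - C c₀ with hqdef
  have hq0 : (aeval y) q = 0 := by
    simp [hqdef, hy2, Algebra.smul_def]
  have hmon : q.Monic := by
    unfold q; monicity!
  have hdeg : q.natDegree = 2 := by
    unfold q; compute_degree!
  have hmod := Polynomial.modByMonic_add_div p q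
  have h1 : (aeval y) p = (aeval y) (p %ₘ q) := by
    conv_lhs => rw [← hmod]
    simp [hq0]
  have hdlt : (p %ₘ q).degree < q.degree := Polynomial.degree_modByMonic_lt p hmon
  have hdle : (p %ₘ q).degree ≤ 1 := by
    rw [Polynomial.degree_eq_natDegree hmon.ne_zero, hdeg] at hdlt
    exact Order.le_of_lt_succ (by exact_mod_cast hdlt)
  have hrep := Polynomial.eq_X_add_C_of_degree_le_one hdle
  refine ⟨(p %ₘ q).coeff 0, (p %ₘ q).coeff 1, ?_⟩
  rw [h1]
  conv_lhs => rw [hrep]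
  simp only [map_add, map_mul, aeval_C, aeval_X]
  rw [Algebra.smul_def]
  exact add_comm _ _

/-- Let `F` be a division ring and `k` a subfield of its centre.
Let `x ∈ F \ k` satisfy `x² = c₁x + c₀` with `c₀, c₁ ∈ k`.  The set `E` of matrices
`A ∈ M₂(k)` such that there is `b ∈ F` with `a₁₁ + a₂₁x = b` and `a₁₂ + a₂₂x = b·x`
is a `k`-subalgebra of `M₂(k)`, and `a + bx ↦ !![a, b·c₀; b, a + b·c₁]` is a
`k`-algebra isomorphism from `k(x)` onto `E`. -/
theorem stmt0 {k F : Type*} [Field k] [DivisionRing F] [Algebra k F]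
    (x : F) (hx : x ∉ Set.range (algebraMap k F)) (c₀ c₁ : k)
    (hx2 : x ^ 2 = c₁ • x + algebraMap k F c₀) :
    ∃ E : Subalgebra k (Matrix (Fin 2) (Fin 2) k),
      (E : Set (Matrix (Fin 2) (Fin 2) k)) =
        {A | ∃ b : F, algebraMap k F (A 0 0) + (A 1 0) • x = b ∧
                      algebraMap k F (A 0 1) + (A 1 1) • x = b * x} ∧
      ∃ e : Algebra.adjoin k ({x} : Set F) ≃ₐ[k] E,
        ∀ a b : k,
          (e ⟨algebraMap k F a + b • x,
              add_mem (Subalgebra.algebraMap_mem _ a)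
                (Subalgebra.smul_mem _ (Algebra.self_mem_adjoin_singleton k x) b)⟩ :
            Matrix (Fin 2) (Fin 2) k) = !![a, b * c₀; b, a + b * c₁] := by
  classical
  set M : (Matrix (Fin 2) (Fin 2) k) := !![0, c₀; 1, c₁] with hMdef
  -- independence of 1, x
  have hindx : ∀ a b : k, algebraMap k F a + b • x = 0 → a = 0 ∧ b = 0 := by
    intro a b h
    by_cases hb : b = 0
    · subst hb
      simp only [zero_smul, add_zero] at h
      exact ⟨(algebraMap k F).injective (by simpa using h), rfl⟩
    · exfalso
      apply hx
      refine ⟨b⁻¹ * (-a), ?_⟩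
      have hbx : b • x = algebraMap k F (-a) := by
        rw [map_neg, eq_neg_iff_add_eq_zero, add_comm]; exact h
      calc algebraMap k F (b⁻¹ * (-a)) = b⁻¹ • algebraMap k F (-a) := by
            rw [Algebra.smul_def, map_mul]
        _ = b⁻¹ • (b • x) := by rw [hbx]
        _ = x := by rw [smul_smul, inv_mul_cancel₀ hb, one_smul]
  -- independence of 1, M
  have hindM : ∀ a b : k, algebraMap k (Matrix (Fin 2) (Fin 2) k) a + b • M = 0 → a = 0 ∧ b = 0 := by
    intro a b h
    have h10 := congrFun (congrFun h 1) 0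
    have h00 := congrFun (congrFun h 0) 0
    simp [hMdef, Matrix.add_apply, Matrix.smul_apply, Matrix.zero_apply, Matrix.mul_apply,
        Fin.sum_univ_two, Matrix.algebraMap_matrix_apply, smul_eq_mul] at h10 h00
    exact ⟨h00, h10⟩
  -- M is quadratic
  have hM2 : M ^ 2 = c₁ • M + algebraMap k (Matrix (Fin 2) (Fin 2) k) c₀ := by
    ext i j
    fin_cases i <;> fin_cases j <;>
      simp [hMdef, pow_two, Matrix.add_apply, Matrix.smul_apply, Matrix.zero_apply, Matrix.mul_apply,
        Fin.sum_univ_two, Matrix.algebraMap_matrix_apply, smul_eq_mul, mul_comm, add_comm]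
  -- multiplication rule in F
  have hmulx : ∀ a b : k, (algebraMap k F a + b • x) * x
      = algebraMap k F (b * c₀) + (a + b * c₁) • x := by
    intro a b
    have : (b • x) * x = b • x ^ 2 := by rw [pow_two, smul_mul_assoc]
    rw [add_mul, this, hx2, smul_add, smul_smul, Algebra.smul_def b (algebraMap k F c₀),
      ← map_mul, ← Algebra.smul_def, add_smul, mul_comm b c₁]
    abel
  refine ⟨Algebra.adjoin k {M}, ?_, ?_⟩
  · -- set description
    ext A
    simp only [SetLike.mem_coe, Set.mem_setOf_eq]
    constructor
    · intro hA
      obtain ⟨a, b, rfl⟩ := aux_adjoin c₀ c₁ M hM2 A hA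
      have e00 : (algebraMap k (Matrix (Fin 2) (Fin 2) k) a + b • M) 0 0 = a := by
        simp [hMdef, Matrix.add_apply, Matrix.smul_apply, Matrix.zero_apply, Matrix.mul_apply,
        Fin.sum_univ_two, Matrix.algebraMap_matrix_apply, smul_eq_mul]
      have e01 : (algebraMap k (Matrix (Fin 2) (Fin 2) k) a + b • M) 0 1 = b * c₀ := by
        simp [hMdef, Matrix.add_apply, Matrix.smul_apply, Matrix.zero_apply, Matrix.mul_apply,
        Fin.sum_univ_two, Matrix.algebraMap_matrix_apply, smul_eq_mul]
      have e10 : (algebraMap k (Matrix (Fin 2) (Fin 2) k) a + b • M) 1 0 = b := by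
        simp [hMdef, Matrix.add_apply, Matrix.smul_apply, Matrix.zero_apply, Matrix.mul_apply,
        Fin.sum_univ_two, Matrix.algebraMap_matrix_apply, smul_eq_mul]
      have e11 : (algebraMap k (Matrix (Fin 2) (Fin 2) k) a + b • M) 1 1 = a + b * c₁ := by
        simp [hMdef, Matrix.add_apply, Matrix.smul_apply, Matrix.zero_apply, Matrix.mul_apply,
        Fin.sum_univ_two, Matrix.algebraMap_matrix_apply, smul_eq_mul]
      refine ⟨algebraMap k F a + b • x, by rw [e00, e10], ?_⟩
      rw [e01, e11, hmulx]
    · rintro ⟨bF, h1, h2⟩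
      rw [← h1, hmulx] at h2
      have hdiff : algebraMap k F (A 0 1 - A 1 0 * c₀) + (A 1 1 - (A 0 0 + A 1 0 * c₁)) • x = 0 := by
        rw [map_sub, sub_smul]
        rw [sub_add_sub_comm, h2, sub_self]
      obtain ⟨hc0, hc1⟩ := hindx _ _ hdiff
      have hA01 : A 0 1 = A 1 0 * c₀ := sub_eq_zero.mp hc0
      have hA11 : A 1 1 = A 0 0 + A 1 0 * c₁ := sub_eq_zero.mp hc1
      have : A = algebraMap k (Matrix (Fin 2) (Fin 2) k) (A 0 0) + (A 1 0) • M := by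
        ext i j
        fin_cases i <;> fin_cases j <;>
          simp [hMdef, Matrix.add_apply, Matrix.smul_apply, Matrix.zero_apply, Matrix.mul_apply,
        Fin.sum_univ_two, Matrix.algebraMap_matrix_apply, smul_eq_mul, hA01, hA11]
      rw [this]
      exact add_mem (Subalgebra.algebraMap_mem _ _)
        (Subalgebra.smul_mem _ (Algebra.self_mem_adjoin_singleton k M) _)
  · -- the isomorphism
    have hmemx : ∀ p : k[X], aeval x p ∈ Algebra.adjoin k ({x} : Set F) := by
      intro p
      rw [Algebra.adjoin_singleton_eq_range_aeval]
      exact ⟨p, rfl⟩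
    have hmemM : ∀ p : k[X], aeval M p ∈ Algebra.adjoin k ({M} : Set (Matrix (Fin 2) (Fin 2) k)) := by
      intro p
      rw [Algebra.adjoin_singleton_eq_range_aeval]
      exact ⟨p, rfl⟩
    set f : k[X] →ₐ[k] (Algebra.adjoin k ({x} : Set F)) :=
      (Polynomial.aeval x).codRestrict _ hmemx with hfdef
    set g : k[X] →ₐ[k] (Algebra.adjoin k ({M} : Set (Matrix (Fin 2) (Fin 2) k))) :=
      (Polynomial.aeval M).codRestrict _ hmemM with hgdef
    have hfsurj : Function.Surjective f := by
      rintro ⟨z, hz⟩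
      rw [Algebra.adjoin_singleton_eq_range_aeval] at hz
      obtain ⟨p, hp⟩ := hz
      exact ⟨p, Subtype.ext hp⟩
    have hgsurj : Function.Surjective g := by
      rintro ⟨z, hz⟩
      rw [Algebra.adjoin_singleton_eq_range_aeval] at hz
      obtain ⟨p, hp⟩ := hz
      exact ⟨p, Subtype.ext hp⟩
    have hkerf : RingHom.ker f = Ideal.span {X ^ 2 - C c₁ * X - C c₀} := by
      rw [← aux_ker c₀ c₁ x hx2 hindx]
      ext p
      simp only [RingHom.mem_ker]
      constructor
      · intro h; exact congrArg Subtype.val h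
      · intro h; exact Subtype.ext h
    have hkerg : RingHom.ker g = Ideal.span {X ^ 2 - C c₁ * X - C c₀} := by
      rw [← aux_ker c₀ c₁ M hM2 hindM]
      ext p
      simp only [RingHom.mem_ker]
      constructor
      · intro h; exact congrArg Subtype.val h
      · intro h; exact Subtype.ext h
    have hker : RingHom.ker f = RingHom.ker g := by rw [hkerf, hkerg]
    refine ⟨((Ideal.quotientKerAlgEquivOfSurjective hfsurj).symm.trans
        (Ideal.quotientEquivAlgOfEq k hker)).trans
        (Ideal.quotientKerAlgEquivOfSurjective hgsurj), ?_⟩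
    intro a b
    have key : ∀ p : k[X],
        (((Ideal.quotientKerAlgEquivOfSurjective hfsurj).symm.trans
          (Ideal.quotientEquivAlgOfEq k hker)).trans
          (Ideal.quotientKerAlgEquivOfSurjective hgsurj)) (f p) = g p := by
      intro p
      rw [AlgEquiv.trans_apply, AlgEquiv.trans_apply]
      have h1 : (Ideal.quotientKerAlgEquivOfSurjective hfsurj).symm (f p)
          = Ideal.Quotient.mk (RingHom.ker f) p := by
        rw [AlgEquiv.symm_apply_eq]
        rfl
      rw [h1, Ideal.quotientEquivAlgOfEq_mk]
      rfl
    have harg : (⟨algebraMap k F a + b • x,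
        add_mem (Subalgebra.algebraMap_mem _ a)
          (Subalgebra.smul_mem _ (Algebra.self_mem_adjoin_singleton k x) b)⟩ :
        Algebra.adjoin k ({x} : Set F)) = f (C a + C b * X) := by
      apply Subtype.ext
      show algebraMap k F a + b • x = aeval x (C a + C b * X)
      simp [Algebra.smul_def]
    rw [harg, key]
    show aeval M (C a + C b * X) = !![a, b * c₀; b, a + b * c₁]
    simp only [map_add, map_mul, aeval_C, aeval_X]
    ext i j
    fin_cases i <;> fin_cases j <;>
      simp [hMdef, Matrix.add_apply, Matrix.smul_apply, Matrix.zero_apply, Matrix.mul_apply,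
        Fin.sum_univ_two, Matrix.algebraMap_matrix_apply, smul_eq_mul]
end

section
/- If A ∈ M₃(k) and B ∈ M₂(K) satisfy B·C₂ = C₂·A (viewing A as a matrix over K via the inclusion k ⊆ K), then there exists λ ∈ k with A = λ·I₃ and B = λ·I₂. In particular, the endomorphism ring of the preprojective representation P₂ is reduced to k. -/
/-- Let `K = k(x,y)` with `x² = c₀ ∈ k`, `y² = a₀ + a₁x`, and
`1, x, y, xy` a `k`-basis of `K`.  Let `C₂ = !![1,0,x; 0,1,y]`.  If `A ∈ M₃(k)` and
`B ∈ M₂(K)` satisfy `B·C₂ = C₂·A`, then `A = λ·I₃` and `B = λ·I₂` for some `λ ∈ k`.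
In particular `End(P₂) = k`. -/
theorem stmt1 {k K : Type*} [Field k] [Field K] [Algebra k K]
    (x y : K) (c₀ a₀ a₁ : k)
    (hx : x ^ 2 = algebraMap k K c₀)
    (hy : y ^ 2 = algebraMap k K a₀ + algebraMap k K a₁ * x)
    (hbasis : LinearIndependent k ![1, x, y, x * y])
    (hspan : Submodule.span k {1, x, y, x * y} = ⊤)
    (A : Matrix (Fin 3) (Fin 3) k) (B : Matrix (Fin 2) (Fin 2) K)
    (h : B * !![1, 0, x; 0, 1, y] = !![1, 0, x; 0, 1, y] * A.map (algebraMap k K)) :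
    ∃ lam : k, A = lam • (1 : Matrix (Fin 3) (Fin 3) k) ∧
      B = algebraMap k K lam • (1 : Matrix (Fin 2) (Fin 2) K) := by
  set e := algebraMap k K with he
  have h00 := congrFun (congrFun h 0) 0
  have h01 := congrFun (congrFun h 0) 1
  have h02 := congrFun (congrFun h 0) 2
  have h10 := congrFun (congrFun h 1) 0
  have h11 := congrFun (congrFun h 1) 1
  have h12 := congrFun (congrFun h 1) 2
  simp [Matrix.mul_apply, Fin.sum_univ_three, Fin.sum_univ_two, Matrix.map_apply]
    at h00 h01 h02 h10 h11 h12
  have hli := Fintype.linearIndependent_iff.mp hbasis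
  have key1 := hli ![A 2 0 * c₀ - A 0 2, A 0 0 - A 2 2, A 0 1, A 2 1] (by
    simp only [Fin.sum_univ_four, Matrix.cons_val_zero, Matrix.cons_val_one,
      Matrix.head_cons, Matrix.cons_val_two, Matrix.cons_val_three, Matrix.tail_cons,
      Algebra.smul_def, map_sub, map_mul, ← he]
    linear_combination -(x * h00) - y * h01 + h02 - e (A 2 0) * hx)
  have key2 := hli ![A 2 1 * a₀ - A 1 2, A 1 0 + A 2 1 * a₁, A 1 1 - A 2 2, A 2 0] (by
    simp only [Fin.sum_univ_four, Matrix.cons_val_zero, Matrix.cons_val_one,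
      Matrix.head_cons, Matrix.cons_val_two, Matrix.cons_val_three, Matrix.tail_cons,
      Algebra.smul_def, map_sub, map_add, map_mul, ← he]
    linear_combination -(x * h10) - y * h11 + h12 - e (A 2 1) * hy)
  have e1 := key1 0; have e2 := key1 1; have e3 := key1 2; have e4 := key1 3
  have f1 := key2 0; have f2 := key2 1; have f3 := key2 2; have f4 := key2 3
  simp only [Matrix.cons_val_zero, Matrix.cons_val_one, Matrix.head_cons,
    Matrix.cons_val_two, Matrix.cons_val_three, Matrix.tail_cons] at e1 e2 e3 e4 f1 f2 f3 f4
  -- names: e1: A20*c₀ - A02 = 0, e2: A00 - A22 = 0, e3: A01 = 0, e4: A21 = 0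
  -- f1: A21*a₀ - A12 = 0, f2: A10 + A21*a₁ = 0, f3: A11 - A22 = 0, f4: A20 = 0
  have hA20 : A 2 0 = 0 := f4
  have hA02 : A 0 2 = 0 := by linear_combination -e1 + c₀ * f4
  have hA00 : A 0 0 = A 2 2 := by linear_combination e2
  have hA01 : A 0 1 = 0 := e3
  have hA21 : A 2 1 = 0 := e4
  have hA12 : A 1 2 = 0 := by linear_combination -f1 + a₀ * e4
  have hA10 : A 1 0 = 0 := by linear_combination f2 - a₁ * e4
  have hA11 : A 1 1 = A 2 2 := by linear_combination f3
  refine ⟨A 2 2, ?_, ?_⟩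
  · ext i j
    fin_cases i <;> fin_cases j <;>
      simp [Matrix.smul_apply, Matrix.one_apply, hA00, hA01, hA02, hA10, hA11, hA12,
        hA20, hA21]
  · ext i j
    fin_cases i <;> fin_cases j <;>
      simp [Matrix.smul_apply, Matrix.one_apply, h00, h01, h10, h11, hA00, hA01, hA10,
        hA11, hA20, hA21, he]
end

section
/- If A = (a_ij) ∈ M₂(k) and b ∈ K satisfy a₁₁ + a₂₁y = b and a₁₂ + a₂₂y = b·y, then a₂₁ = 0, a₁₂ = 0, a₁₁ = a₂₂ and b = a₁₁ ∈ k; that is, A is a scalar matrix and b is the corresponding scalar. In particular, if y is a primitive element of a degree-4 field extension K/k, then the endomorphism ring of S_y equals k. -/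
/-- Let `K/k` be a field extension and `y ∈ K` with `1, y, y²`
`k`-linearly independent.  If `A ∈ M₂(k)` and `b ∈ K` satisfy
`a₁₁ + a₂₁y = b` and `a₁₂ + a₂₂y = b·y`, then `a₂₁ = 0`, `a₁₂ = 0`,
`a₁₁ = a₂₂` and `b = a₁₁ ∈ k`. -/
theorem stmt2 {k K : Type*} [Field k] [Field K] [Algebra k K]
    (y : K) (hy : LinearIndependent k ![1, y, y ^ 2])
    (A : Matrix (Fin 2) (Fin 2) k) (b : K)
    (h1 : algebraMap k K (A 0 0) + algebraMap k K (A 1 0) * y = b)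
    (h2 : algebraMap k K (A 0 1) + algebraMap k K (A 1 1) * y = b * y) :
    A 1 0 = 0 ∧ A 0 1 = 0 ∧ A 0 0 = A 1 1 ∧ b = algebraMap k K (A 0 0) := by
  have key := (Fintype.linearIndependent_iff.mp hy)
    ![A 0 1, A 1 1 - A 0 0, -(A 1 0)] ?_
  · have e0 := key 0
    have e1 := key 1
    have e2 := key 2
    simp at e0 e1 e2
    have h00 : A 0 0 = A 1 1 := by linear_combination -e1
    refine ⟨e2, e0, h00, ?_⟩
    rw [← h1, e2, map_zero, zero_mul, add_zero]
  · subst h1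
    have : ∀ i, (![A 0 1, A 1 1 - A 0 0, -(A 1 0)] i) • (![1, y, y ^ 2] i)
        = ![algebraMap k K (A 0 1), algebraMap k K (A 1 1 - A 0 0) * y,
            algebraMap k K (-(A 1 0)) * y ^ 2] i := by
      intro i; fin_cases i <;> simp [Algebra.smul_def]
    rw [Fin.sum_univ_three, this 0, this 1, this 2]
    simp only [Matrix.cons_val_zero, Matrix.cons_val_one, Matrix.head_cons,
      Matrix.cons_val_two, Matrix.tail_cons, map_sub, map_neg]
    linear_combination h2
end

section
/- If K/k admits no primitive element (there is no t ∈ K with K = k(t)), then k has characteristic 2, the extension K/k is purely inseparable, and K/k is biquadratic: there exist x, y ∈ K with x² ∈ k, y² ∈ k, [k(x):k] = 2, and K = k(x, y). -/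
open Polynomial IntermediateField Module

/-- If every element has minpoly degree ≤ 2 and `x` is not separable, then
`2 = 0` in `k` and `x ^ 2 ∈ k`. -/
lemma aux_insep {k K : Type*} [Field k] [Field K] [Algebra k K] [FiniteDimensional k K]
    (x : K) (hd : (minpoly k x).natDegree = 1 ∨ (minpoly k x).natDegree = 2)
    (hx : ¬ IsSeparable k x) :
    (2 : k) = 0 ∧ x ^ 2 ∈ Set.range (algebraMap k K) := by
  have hint : IsIntegral k x := IsIntegral.of_finite k x
  have hirr := minpoly.irreducible hint
  have hder : (minpoly k x).derivative = 0 := by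
    by_contra h
    exact hx ((Polynomial.separable_iff_derivative_ne_zero hirr).mpr h)
  have hmon : (minpoly k x).Monic := minpoly.monic hint
  have hdeg2 : (minpoly k x).natDegree = 2 := by
    rcases hd with h | h
    · exfalso
      have h1 : (minpoly k x).coeff 1 = 1 := by
        have := hmon.coeff_natDegree
        rwa [h] at this
      have := Polynomial.coeff_derivative (minpoly k x) 0
      rw [hder] at this
      simp [h1] at this
    · exact h
  have hc2 : (minpoly k x).coeff 2 = 1 := by
    have := hmon.coeff_natDegree
    rwa [hdeg2] at this
  have h2 : (2 : k) = 0 := by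
    have := Polynomial.coeff_derivative (minpoly k x) 1
    rw [hder, hc2] at this
    simp at this
    linear_combination -this
  have hc1 : (minpoly k x).coeff 1 = 0 := by
    have := Polynomial.coeff_derivative (minpoly k x) 0
    rw [hder] at this
    simpa using this.symm
  refine ⟨h2, ⟨-(minpoly k x).coeff 0, ?_⟩⟩
  have h0 := minpoly.aeval k x
  rw [Polynomial.aeval_eq_sum_range, hdeg2] at h0
  simp [Finset.sum_range_succ, hc1, hc2, Algebra.smul_def] at h0
  rw [map_neg]
  linear_combination -h0

open Polynomial IntermediateField Module

lemma aux_sep {k K : Type*} [Field k] [Field K] [Algebra k K] [FiniteDimensional k K]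
    (h2 : (2 : k) = 0) (x : K) (hxk : x ∉ Set.range (algebraMap k K))
    (hx2 : x ^ 2 ∈ Set.range (algebraMap k K)) : ¬ IsSeparable k x := by
  obtain ⟨c, hc⟩ := hx2
  intro hsep
  have hint : IsIntegral k x := IsIntegral.of_finite k x
  have hirr := minpoly.irreducible hint
  have hder := (Polynomial.separable_iff_derivative_ne_zero hirr).mp hsep
  set p : Polynomial k := X ^ 2 - C c with hp
  have hp0 : Polynomial.aeval x p = 0 := by simp [hp, hc]
  have hdvd : minpoly k x ∣ p := minpoly.dvd k x hp0
  have hdp : p.natDegree = 2 := by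
    rw [hp]; compute_degree!
  have hpne : p ≠ 0 := fun h => by simp [h] at hdp
  have hd2 : 2 ≤ (minpoly k x).natDegree := (minpoly.two_le_natDegree_iff hint).mpr hxk
  have hdle : (minpoly k x).natDegree ≤ 2 := hdp ▸ Polynomial.natDegree_le_of_dvd hdvd hpne
  have hdeq : (minpoly k x).natDegree = 2 := le_antisymm hdle hd2
  obtain ⟨r, hr⟩ := hdvd
  have hrne : r ≠ 0 := fun h => by rw [h, mul_zero] at hr; exact hpne hr
  have hrdeg : r.natDegree = 0 := by
    have := Polynomial.natDegree_mul (minpoly.ne_zero hint) hrne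
    rw [← hr, hdp, hdeq] at this
    omega
  have hrC : r = C (r.coeff 0) := Polynomial.eq_C_of_natDegree_eq_zero hrdeg
  have hmon : (minpoly k x).Monic := minpoly.monic hint
  have hlead : p.leadingCoeff = (minpoly k x).leadingCoeff * r.leadingCoeff := by
    rw [hr, Polynomial.leadingCoeff_mul]
  have hplead : p.leadingCoeff = 1 := by
    have : p.Monic := by rw [hp]; monicity!
    exact this
  rw [hplead, hmon.leadingCoeff, one_mul] at hlead
  have hr1 : r = 1 := by
    have hco : r.coeff 0 = 1 := by
      have h' := hlead.symm
      rwa [Polynomial.leadingCoeff, hrdeg] at h'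
    rw [hrC, hco, map_one]
  have hpeq : minpoly k x = p := by rw [hr, hr1, mul_one]
  apply hder
  rw [hpeq, hp]
  have : (C (2:k)) = 0 := by rw [h2, map_zero]
  simp [Polynomial.derivative_sub, Polynomial.derivative_X_pow]
  exact (by rw [one_add_one_eq_two, ← map_ofNat C 2, h2, map_zero] : (1 + 1 : k[X]) = 0)


/-- Let `K/k` be a field extension of degree 4.  If `K/k` admits no
primitive element, then `char k = 2`, `K/k` is purely inseparable, and `K/k` is
biquadratic: there are `x, y ∈ K` with `x², y² ∈ k`, `[k(x):k] = 2` and `K = k(x,y)`. -/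
theorem stmt3 {k K : Type*} [Field k] [Field K] [Algebra k K]
    (hdeg : Module.finrank k K = 4)
    (hnoprim : ¬ ∃ t : K, IntermediateField.adjoin k {t} = ⊤) :
    ringChar k = 2 ∧ IsPurelyInseparable k K ∧
      ∃ x y : K, x ^ 2 ∈ Set.range (algebraMap k K) ∧ y ^ 2 ∈ Set.range (algebraMap k K) ∧
        Module.finrank k (IntermediateField.adjoin k ({x} : Set K)) = 2 ∧
        IntermediateField.adjoin k ({x, y} : Set K) = ⊤ := by
  have hfd : FiniteDimensional k K := FiniteDimensional.of_finrank_pos (by rw [hdeg]; norm_num)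
  -- basic facts about intermediate fields
  have hdvd : ∀ L : IntermediateField k K, Module.finrank k L ∣ 4 := fun L => by
    rw [← hdeg]
    exact ⟨Module.finrank L K, (Module.finrank_mul_finrank k L K).symm⟩
  have hne_top : ∀ L : IntermediateField k K, L ≠ ⊤ → Module.finrank k L ≠ 4 := by
    intro L hL h4
    exact hL (IntermediateField.eq_of_le_of_finrank_le le_top
      (by rw [IntermediateField.finrank_top', hdeg, h4]))
  have hcases : ∀ L : IntermediateField k K, L ≠ ⊤ →
      Module.finrank k L = 1 ∨ Module.finrank k L = 2 := by
    intro L hL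
    obtain ⟨i, hi, he⟩ := (Nat.dvd_prime_pow Nat.prime_two).mp
      (show Module.finrank k L ∣ 2 ^ 2 from hdvd L)
    interval_cases i <;> simp_all
  have hexists : ∀ L : IntermediateField k K, L ≠ ⊤ → ∃ b : K, b ∉ L := by
    intro L hL
    by_contra h
    push_neg at h
    exact hL (eq_top_iff.mpr fun z _ => h z)
  -- every element has minpoly degree 1 or 2
  have hd2 : ∀ x : K, (minpoly k x).natDegree = 1 ∨ (minpoly k x).natDegree = 2 := by
    intro x
    have hint : IsIntegral k x := IsIntegral.of_finite k x
    have := hcases (IntermediateField.adjoin k {x}) (fun h => hnoprim ⟨x, h⟩)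
    rwa [IntermediateField.adjoin.finrank hint] at this
  -- K/k is not separable
  have hnotsep : ¬ Algebra.IsSeparable k K := fun h => hnoprim (Field.exists_primitive_element k K)
  obtain ⟨x₀, hx₀⟩ : ∃ x : K, ¬ IsSeparable k x := by
    by_contra h
    push_neg at h
    exact hnotsep ⟨h⟩
  have h2 : (2 : k) = 0 := (aux_insep x₀ (hd2 x₀) hx₀).1
  have hchar : ringChar k = 2 := by
    have hdv : ringChar k ∣ 2 := ringChar.dvd h2
    have hne1 : ringChar k ≠ 1 := CharP.ringChar_ne_one
    rcases (Nat.dvd_prime Nat.prime_two).mp hdv with h | h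
    · exact absurd h hne1
    · exact h
  -- all squares lie in k
  have hsq : ∀ x : K, x ^ 2 ∈ Set.range (algebraMap k K) := by
    intro x
    by_cases hxk : x ∈ Set.range (algebraMap k K)
    · obtain ⟨c, rfl⟩ := hxk
      exact ⟨c ^ 2, by rw [map_pow]⟩
    by_cases hxs : IsSeparable k x
    · exfalso
      have hxS : x ∈ separableClosure k K := mem_separableClosure_iff.mpr hxs
      have hSne : separableClosure k K ≠ ⊤ :=
        fun h => hnotsep ((separableClosure.eq_top_iff k K).mp h)
      obtain ⟨b, hb⟩ := hexists _ hSne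
      have hbsep : ¬ IsSeparable k b := fun h => hb (mem_separableClosure_iff.mpr h)
      have hcsep : ¬ IsSeparable k (x + b) := by
        intro h
        apply hb
        have hmem : x + b ∈ separableClosure k K := mem_separableClosure_iff.mpr h
        have := (separableClosure k K).sub_mem hmem hxS
        simpa using this
      obtain ⟨u, hu⟩ := (aux_insep b (hd2 b) hbsep).2
      obtain ⟨v, hv⟩ := (aux_insep (x + b) (hd2 (x + b)) hcsep).2
      have hK2 : (2 : K) = 0 := by
        calc (2 : K) = algebraMap k K 2 := (map_ofNat _ 2).symm
        _ = 0 := by rw [h2, map_zero]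
      have hx2 : x ^ 2 ∈ Set.range (algebraMap k K) := by
        refine ⟨v - u, ?_⟩
        rw [map_sub, hu, hv]
        linear_combination x * b * hK2
      exact (aux_sep h2 x hxk hx2) hxs
    · exact (aux_insep x (hd2 x) hxs).2
  -- purely inseparable
  have hcp : CharP k 2 := hchar ▸ ringChar.charP k
  have hec : ExpChar k 2 := ExpChar.prime Nat.prime_two
  have hpins : IsPurelyInseparable k K :=
    (isPurelyInseparable_iff_pow_mem k 2).mpr fun x => ⟨1, by simpa using hsq x⟩
  refine ⟨hchar, hpins, ?_⟩
  -- construct x and y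
  have hbot_ne : (⊥ : IntermediateField k K) ≠ ⊤ := by
    intro h
    have h1 : Module.finrank k (⊥ : IntermediateField k K) = 1 := IntermediateField.finrank_bot
    rw [h, IntermediateField.finrank_top', hdeg] at h1
    omega
  obtain ⟨x, hx⟩ := hexists ⊥ hbot_ne
  have hxk : x ∉ Set.range (algebraMap k K) :=
    fun hr => hx (IntermediateField.mem_bot.mpr hr)
  have hxint : IsIntegral k x := IsIntegral.of_finite k x
  have hxtop : IntermediateField.adjoin k ({x} : Set K) ≠ ⊤ := fun h => hnoprim ⟨x, h⟩
  have hxfr : Module.finrank k (IntermediateField.adjoin k ({x} : Set K)) = 2 := by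
    rcases hcases _ hxtop with h | h
    · exfalso
      rw [IntermediateField.adjoin.finrank hxint] at h
      exact hxk (minpoly.natDegree_eq_one_iff.mp h)
    · exact h
  obtain ⟨y, hy⟩ := hexists _ hxtop
  refine ⟨x, y, hsq x, hsq y, hxfr, ?_⟩
  have hle : IntermediateField.adjoin k ({x} : Set K) ≤ IntermediateField.adjoin k ({x, y} : Set K) :=
    IntermediateField.adjoin.mono k _ _ (by simp)
  by_contra hcon
  have hle2 : Module.finrank k (IntermediateField.adjoin k ({x, y} : Set K)) ≤ 2 := by
    rcases hcases _ hcon with h | h <;> omega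
  have heq := IntermediateField.eq_of_le_of_finrank_le hle (by rw [hxfr]; exact hle2)
  apply hy
  rw [heq]
  exact IntermediateField.subset_adjoin k _ (by simp)
end

section
/- The extension K/k admits a primitive element: there exists t ∈ K with K = k(t). -/
open IntermediateField Module Polynomial

/-- Auxiliary: if `x ∉ L`, `x ^ 2 ∈ L` but `x ^ 2 ∉ k`, then `x` generates `K` over `k`. -/
lemma stmt5_aux {k K : Type*} [Field k] [Field K] [Algebra k K] [FiniteDimensional k K]
    (hdeg : Module.finrank k K = 4) (L : IntermediateField k K)
    (hL : Module.finrank k L = 2) {x : K}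
    (hxL : x ∉ L) (hx2 : x ^ 2 ∈ L) (hx2k : x ^ 2 ∉ (⊥ : IntermediateField k K)) :
    IntermediateField.adjoin k ({x} : Set K) = ⊤ := by
  set M := IntermediateField.adjoin k ({x ^ 2} : Set K) with hM
  have hMle : M ≤ L := by rw [hM, adjoin_le_iff]; simpa using hx2
  have hMne : M ≠ ⊥ := by
    intro h
    exact hx2k (h ▸ mem_adjoin_simple_self k (x ^ 2))
  have hML : M = L := by
    refine IntermediateField.eq_of_le_of_finrank_le hMle ?_
    have h1 : finrank k M ≠ 1 := fun h => hMne (finrank_eq_one_iff.mp h)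
    have h0 : 0 < finrank k M := finrank_pos
    omega
  set N := IntermediateField.adjoin k ({x} : Set K) with hN
  have hLle : L ≤ N := by
    rw [← hML, hM, adjoin_le_iff]
    simpa using pow_mem (mem_adjoin_simple_self k x) 2
  have hxN : x ∈ N := mem_adjoin_simple_self k x
  have hne2 : finrank k N ≠ 2 := by
    intro h
    have : L = N := IntermediateField.eq_of_le_of_finrank_le hLle (by omega)
    exact hxL (this ▸ hxN)
  have hne1 : finrank k N ≠ 1 := by
    intro h
    have : N = ⊥ := finrank_eq_one_iff.mp h
    rw [this] at hxN
    exact hxL ((bot_le : (⊥ : IntermediateField k K) ≤ L) hxN)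
  have hdvd : finrank k N ∣ 4 := by
    refine ⟨finrank N K, ?_⟩
    rw [← hdeg, ← Module.finrank_mul_finrank k N K]
  have h4 : finrank k N = 4 := by
    have hle : finrank k N ≤ 4 := Nat.le_of_dvd (by norm_num) hdvd
    have h0 : 0 < finrank k N := finrank_pos
    interval_cases h : finrank k N <;> first
      | rfl
      | omega
      | (exfalso; revert hdvd; rw [h]; decide)
  refine IntermediateField.eq_of_le_of_finrank_le le_top ?_
  rw [IntermediateField.finrank_top', hdeg, h4]

/-- Let `K/k` be a degree-4 field extension and `L` an intermediate
field with `[L:k] = 2` such that `L/k` is separable and `K/L` is purely inseparable.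
Then `K/k` admits a primitive element. -/
theorem stmt5 {k K : Type*} [Field k] [Field K] [Algebra k K]
    (hdeg : Module.finrank k K = 4) (L : IntermediateField k K)
    (hL : Module.finrank k L = 2)
    (hsep : Algebra.IsSeparable k L)
    (hinsep : IsPurelyInseparable L K) :
    ∃ t : K, IntermediateField.adjoin k ({t} : Set K) = ⊤ := by
  have hfd : FiniteDimensional k K := FiniteDimensional.of_finrank_pos (by omega)
  have hfdL : FiniteDimensional L K := FiniteDimensional.right k L K
  have hLK : Module.finrank L K = 2 := by
    have h := Module.finrank_mul_finrank k L K
    rw [hL, hdeg] at h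
    omega
  -- pick b ∉ L
  have hLneTop : L ≠ ⊤ := by
    intro h
    rw [h, IntermediateField.finrank_top'] at hL
    omega
  obtain ⟨b, -, hbL⟩ := SetLike.exists_of_lt (lt_of_le_of_ne le_top hLneTop)
  -- minimal polynomial of b over L
  set q := ringExpChar L with hq
  obtain ⟨n, y, hmin⟩ := IsPurelyInseparable.minpoly_eq_X_pow_sub_C L q b
  have hbL' : b ∉ (algebraMap L K).range := by
    rintro ⟨z, rfl⟩
    exact hbL z.2
  have hint : IsIntegral L b := Algebra.IsIntegral.isIntegral b
  have hdle : (minpoly L b).natDegree ≤ 2 := hLK ▸ minpoly.natDegree_le b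
  have hdne1 : (minpoly L b).natDegree ≠ 1 := by
    intro h
    exact hbL' (minpoly.natDegree_eq_one_iff.mp h)
  have hdpos : 0 < (minpoly L b).natDegree := minpoly.natDegree_pos hint
  have hqn : q ^ n = 2 := by
    have : (minpoly L b).natDegree = q ^ n := by
      rw [hmin, natDegree_X_pow_sub_C]
    omega
  -- b ^ 2 ∈ L
  have hb2 : b ^ 2 ∈ L := by
    have h := minpoly.aeval L b
    rw [hmin] at h
    simp only [map_sub, map_pow, aeval_X, aeval_C, sub_eq_zero] at h
    rw [← hqn, h]
    exact y.2
  -- characteristic 2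
  have hq2 : q = 2 := by
    have hn0 : n ≠ 0 := by rintro rfl; simp at hqn
    have hdvd : q ∣ 2 := hqn ▸ dvd_pow_self q hn0
    rcases (Nat.prime_two.eq_one_or_self_of_dvd q hdvd) with h1 | h2
    · rw [h1, one_pow] at hqn; omega
    · exact h2
  have hcharL : CharP L 2 := by
    have hr : ringChar L = 2 := by
      have : max (ringChar L) 1 = 2 := by rw [← hq2]; rfl
      omega
    exact hr ▸ ringChar.charP L
  haveI : CharP K 2 := charP_of_injective_algebraMap (algebraMap L K).injective 2
  haveI : CharP k 2 := (Algebra.charP_iff k L 2).mpr hcharL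
  haveI : Fact (Nat.Prime 2) := ⟨Nat.prime_two⟩
  by_cases hc : b ^ 2 ∈ (⊥ : IntermediateField k K)
  · -- take t = a + b where a ∈ L \ k
    have hLbot : ¬(L ≤ (⊥ : IntermediateField k K)) := by
      intro h
      have : L = ⊥ := le_bot_iff.mp h
      rw [this, IntermediateField.finrank_bot] at hL
      omega
    obtain ⟨a, haL, hak⟩ := SetLike.not_le_iff_exists.mp hLbot
    have htL : a + b ∉ L := by
      intro h
      have : (a + b) - a ∈ L := L.sub_mem h haL
      rw [add_sub_cancel_left] at this
      exact hbL this
    have ht2 : (a + b) ^ 2 = a ^ 2 + b ^ 2 := add_pow_char a b 2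
    have htmem : (a + b) ^ 2 ∈ L := by
      rw [ht2]
      exact L.add_mem (pow_mem haL 2) hb2
    have htk : (a + b) ^ 2 ∉ (⊥ : IntermediateField k K) := by
      rw [ht2]
      intro h
      have ha2 : a ^ 2 ∈ (⊥ : IntermediateField k K) := by
        have := sub_mem h hc
        rwa [add_sub_cancel_right] at this
      -- a is separable over k and a ^ 2 ∈ k, char 2 : then a ∈ k, contradiction
      rw [IntermediateField.mem_bot] at ha2
      obtain ⟨e, he⟩ := ha2
      set α : L := ⟨a, haL⟩ with hα
      have hα2 : α ^ 2 ∈ (algebraMap k L).range := by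
        refine ⟨e, Subtype.ext ?_⟩
        have h3 : ((algebraMap k L e : L) : K) = algebraMap k K e :=
          (IsScalarTower.algebraMap_apply k L K e).symm
        rw [h3, he]
        push_cast
        rfl
      haveI : ExpChar k 2 := ExpChar.prime Nat.prime_two
      have h1 : (minpoly k α).natSepDegree = 1 :=
        (minpoly.natSepDegree_eq_one_iff_pow_mem 2).mpr ⟨1, by simpa using hα2⟩
      have hsepα : (minpoly k α).Separable := Algebra.IsSeparable.isSeparable k α
      have h2 : (minpoly k α).natDegree = 1 := by
        rw [← hsepα.natSepDegree_eq_natDegree, h1]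
      obtain ⟨e', he'⟩ := minpoly.natDegree_eq_one_iff.mp h2
      apply hak
      rw [IntermediateField.mem_bot]
      refine ⟨e', ?_⟩
      rw [IsScalarTower.algebraMap_apply k L K, he']
      rfl
    exact ⟨a + b, stmt5_aux hdeg L hL htL htmem htk⟩
  · exact ⟨b, stmt5_aux hdeg L hL hbL hb2 hc⟩
end

section
/- Every anisotropic quadratic form Q on k³ is similar to a form −aX² − bY² + abZ²: there exist a, b, λ ∈ kˣ such that the scaled form λ·Q is isometric (equivalent) to the diagonal quadratic form (X, Y, Z) ↦ −aX² − bY² + abZ². -/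
open QuadraticMap

/-- Scaling preserves equivalence of quadratic forms. -/
lemma equiv_smul_aux {k M₁ M₂ : Type*} [Field k] [AddCommGroup M₁] [AddCommGroup M₂]
    [Module k M₁] [Module k M₂] {Q₁ : QuadraticForm k M₁} {Q₂ : QuadraticForm k M₂}
    (h : QuadraticMap.Equivalent Q₁ Q₂) (c : k) :
    QuadraticMap.Equivalent (c • Q₁) (c • Q₂) := by
  obtain ⟨f⟩ := h
  exact ⟨{ f.toLinearEquiv with
    map_app' := fun m => by simp [f.map_app' m] }⟩

/-- Anisotropy transfers along isometry equivalences. -/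
lemma aniso_of_equiv {k M₁ M₂ : Type*} [Field k] [AddCommGroup M₁] [AddCommGroup M₂]
    [Module k M₁] [Module k M₂] {Q₁ : QuadraticForm k M₁} {Q₂ : QuadraticForm k M₂}
    (h : QuadraticMap.Equivalent Q₁ Q₂) (hQ : Q₁.Anisotropic) : Q₂.Anisotropic := by
  obtain ⟨f⟩ := h
  intro x hx
  have : Q₁ (f.symm x) = 0 := by rw [← f.map_app (f.symm x)]; simpa using hx
  have := hQ _ this
  simpa using congrArg f this

/-- Let `k` be a field of characteristic `≠ 2`.  Every anisotropic
quadratic form `Q` on `k³` is similar to a form `−aX² − bY² + abZ²`: there are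
units `a, b, λ` of `k` such that `λ·Q` is equivalent (isometric) to the diagonal
form with weights `(−a, −b, ab)`. -/
theorem stmt11 {k : Type*} [Field k] (hchar : ringChar k ≠ 2)
    (Q : QuadraticForm k (Fin 3 → k)) (hQ : Q.Anisotropic) :
    ∃ a b lam : kˣ,
      QuadraticMap.Equivalent ((lam : k) • Q)
        (QuadraticMap.weightedSumSquares k ![-(a : k), -(b : k), (a : k) * (b : k)]) := by
  have h2 : (2 : k) ≠ 0 := Ring.two_ne_zero hchar
  haveI : Invertible (2 : k) := invertibleOfNonzero h2
  have h3 : Module.finrank k (Fin 3 → k) = 3 := Module.finrank_fin_fun k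
  obtain ⟨w, hw⟩ := Q.equivalent_weightedSumSquares
  -- reindex the weights to `Fin 3`
  set c : Fin 3 → k := w ∘ (finCongr h3).symm with hc
  have hreidx : QuadraticMap.Equivalent (weightedSumSquares k w) (weightedSumSquares k c) := by
    refine ⟨{ LinearEquiv.funCongrLeft k k (finCongr h3).symm with map_app' := fun m => ?_ }⟩
    simp only [weightedSumSquares_apply]
    rw [← Equiv.sum_comp (finCongr h3)]
    congr 1
  have hwc : QuadraticMap.Equivalent Q (weightedSumSquares k c) := hw.trans hreidx
  have hca : (weightedSumSquares k c).Anisotropic := aniso_of_equiv hwc hQ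
  have hcne : ∀ i, c i ≠ 0 := by
    intro i hi
    have h0 : weightedSumSquares k c (Pi.single i 1) = 0 := by
      rw [weightedSumSquares_apply]
      rw [Finset.sum_eq_single i]
      · simp [hi]
      · intro j _ hj; simp [Pi.single_apply, hj]
      · simp
    have := hca _ h0
    have : (Pi.single i 1 : Fin 3 → k) i = 0 := by rw [this]; rfl
    simp at this
  -- choose the units
  refine ⟨Units.mk0 (-(c 2 / c 1)) (by simp [hcne 1, hcne 2]),
    Units.mk0 (-(c 2 / c 0)) (by simp [hcne 0, hcne 2]),
    Units.mk0 (c 2 / (c 0 * c 1)) (by simp [hcne 0, hcne 1, hcne 2]), ?_⟩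
  set lam : k := c 2 / (c 0 * c 1)
  have hQs : QuadraticMap.Equivalent (lam • Q) (lam • weightedSumSquares k c) :=
    equiv_smul_aux hwc lam
  have hsm : lam • weightedSumSquares k c = weightedSumSquares k (fun i => lam * c i) := by
    ext x
    simp [weightedSumSquares_apply, Finset.mul_sum, smul_eq_mul, mul_assoc]
  have hvec : (fun i => lam * c i) =
      ![-(((Units.mk0 (-(c 2 / c 1)) (by simp [hcne 1, hcne 2]) : kˣ)) : k),
        -(((Units.mk0 (-(c 2 / c 0)) (by simp [hcne 0, hcne 2]) : kˣ)) : k),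
        ((Units.mk0 (-(c 2 / c 1)) (by simp [hcne 1, hcne 2]) : kˣ) : k) *
        ((Units.mk0 (-(c 2 / c 0)) (by simp [hcne 0, hcne 2]) : kˣ) : k)] := by
    have h0 := hcne 0; have h1 := hcne 1; have h2' := hcne 2
    funext i
    fin_cases i
    · show c 2 / (c 0 * c 1) * c 0 = -(-(c 2 / c 1))
      field_simp [h0, h1, h2']
    · show c 2 / (c 0 * c 1) * c 1 = -(-(c 2 / c 0))
      field_simp [h0, h1, h2']
    · show c 2 / (c 0 * c 1) * c 2 = -(c 2 / c 1) * -(c 2 / c 0)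
      field_simp [h0, h1, h2']
  rw [← hvec, ← hsm]
  exact hQs
end

section
/- If F is not commutative, then the center of F is exactly k, and F is a quaternion algebra over k: there exist a, b ∈ kˣ and a k-algebra isomorphism F ≅ (a, b / k). -/
section Aux

variable {k : Type*} [Field k] {F : Type*} [DivisionRing F] [Algebra k F]

theorem aux_smul0 (r : k) (v : F) (h : r • v = 0) : r = 0 ∨ v = 0 := by
  rw [Algebra.smul_def] at h
  rcases mul_eq_zero.mp h with h | h
  · exact Or.inl ((algebraMap k F).injective (by simpa using h))
  · exact Or.inr h

/-- if `r•1 + s•v = 0` and `s ≠ 0` then `v` is in the image of `k`. -/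
theorem aux_alg (r s : k) (v : F) (h : r • (1 : F) + s • v = 0) (hs : s ≠ 0) :
    v = algebraMap k F (-r / s) := by
  have h1 : s • v = (-r) • (1 : F) := by
    rw [neg_smul, eq_neg_iff_add_eq_zero, add_comm, h]
  have h2 : v = (s⁻¹ * -r) • (1 : F) := by
    rw [mul_smul, ← h1, smul_smul, inv_mul_cancel₀ hs, one_smul]
  rw [h2, Algebra.algebraMap_eq_smul_one]
  congr 1
  field_simp

end Aux
section Aux2

variable {k : Type*} [Field k] {F : Type*} [DivisionRing F] [Algebra k F]

theorem aux_span_comm {S : Set F} (hS : ∀ u ∈ S, ∀ v ∈ S, Commute u v)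
    (htop : Submodule.span k S = ⊤) : ∀ s t : F, s * t = t * s := by
  have key : ∀ u ∈ S, ∀ t ∈ Submodule.span k S, Commute u t := by
    intro u hu t ht
    induction ht using Submodule.span_induction with
    | mem v hv => exact hS u hu v hv
    | zero => exact Commute.zero_right u
    | add a b _ _ ha hb => exact ha.add_right hb
    | smul r a _ ha => exact ha.smul_right r
  have key2 : ∀ s ∈ Submodule.span k S, ∀ t ∈ Submodule.span k S, Commute s t := by
    intro s hs t ht
    induction hs using Submodule.span_induction with
    | mem v hv => exact key v hv t ht
    | zero => exact Commute.zero_left t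
    | add a b _ _ ha hb => exact ha.add_left hb
    | smul r a _ ha => exact ha.smul_left r
  intro s t
  exact key2 s (htop ▸ Submodule.mem_top) t (htop ▸ Submodule.mem_top)

theorem aux_quad [FiniteDimensional k F] (hdim : Module.finrank k F = 4)
    (hnc : ¬ ∀ s t : F, s * t = t * s) {x : F}
    (hx : ∀ r : k, x ≠ algebraMap k F r) :
    ∃ c d : k, x * x = c • x + d • (1 : F) := by
  by_contra hq
  push_neg at hq
  have ind3 : ∀ a b c : k, a • (1:F) + b • x + c • (x*x) = 0 → a = 0 ∧ b = 0 ∧ c = 0 := by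
    intro a b c h
    rcases eq_or_ne c 0 with hc | hc
    · subst hc
      rw [zero_smul, add_zero] at h
      rcases eq_or_ne b 0 with hb | hb
      · subst hb
        rw [zero_smul, add_zero] at h
        rcases aux_smul0 a 1 h with h | h
        · exact ⟨h, rfl, rfl⟩
        · exact absurd h one_ne_zero
      · exact absurd (aux_alg a b x h hb) (hx _)
    · exfalso
      apply hq (-b/c) (-a/c)
      have h1 : c • (x*x) = (-b) • x + (-a) • (1:F) := by
        have h1 := eq_neg_of_add_eq_zero_right h
        rw [neg_add, ← neg_smul, ← neg_smul, add_comm] at h1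
        exact h1
      have h2 : x * x = (c⁻¹ * -b) • x + (c⁻¹ * -a) • (1:F) := by
        calc x*x = (c⁻¹ * c) • (x*x) := by rw [inv_mul_cancel₀ hc, one_smul]
        _ = c⁻¹ • ((-b) • x + (-a) • (1:F)) := by rw [mul_smul, h1]
        _ = _ := by rw [smul_add, smul_smul, smul_smul]
      rw [h2]
      congr 1 <;> congr 1 <;> field_simp
  by_cases h3 : ∃ a b c : k, x * (x * x) = a • (1:F) + b • x + c • (x*x)
  · -- V := span{1,x,x²} is a 3-dim "field", leading to 6 independent vectors: contradiction
    obtain ⟨ca, cb, cc, hx3⟩ := h3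
    set V := Submodule.span k (Set.range ![(1:F), x, x*x]) with hV
    have h1V : (1:F) ∈ V := Submodule.subset_span ⟨0, rfl⟩
    have hxVm : x ∈ V := Submodule.subset_span ⟨1, rfl⟩
    have hx2V : x*x ∈ V := Submodule.subset_span ⟨2, rfl⟩
    have hcomb : ∀ a b c : k, a • (1:F) + b • x + c • (x*x) ∈ V := fun a b c =>
      add_mem (add_mem (Submodule.smul_mem _ _ h1V) (Submodule.smul_mem _ _ hxVm))
        (Submodule.smul_mem _ _ hx2V)
    have hxmul : ∀ v ∈ V, x * v ∈ V := by
      intro v hv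
      induction hv using Submodule.span_induction with
      | mem u hu =>
        obtain ⟨i, rfl⟩ := hu
        fin_cases i
        · simpa using hxVm
        · exact hx2V
        · show x * (x * x) ∈ V
          rw [hx3]; exact hcomb _ _ _
      | zero => rw [mul_zero]; exact zero_mem _
      | add a b _ _ ha hb => rw [mul_add]; exact add_mem ha hb
      | smul r a _ ha => rw [mul_smul_comm]; exact Submodule.smul_mem _ _ ha
    have hmul : ∀ v ∈ V, ∀ w ∈ V, v * w ∈ V := by
      intro v hv
      induction hv using Submodule.span_induction with
      | mem u hu =>
        obtain ⟨i, rfl⟩ := hu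
        fin_cases i
        · intro w hw; simpa using hw
        · exact hxmul
        · intro w hw
          show (x*x) * w ∈ V
          rw [mul_assoc]
          exact hxmul _ (hxmul _ hw)
      | zero => intro w hw; rw [zero_mul]; exact zero_mem _
      | add a b _ _ ha hb => intro w hw; rw [add_mul]; exact add_mem (ha w hw) (hb w hw)
      | smul r a _ ha => intro w hw; rw [smul_mul_assoc]; exact Submodule.smul_mem _ _ (ha w hw)
    have hinv : ∀ w ∈ V, w ≠ 0 → w⁻¹ ∈ V := by
      intro w hw hw0
      let L : V →ₗ[k] V :=
        { toFun := fun v => ⟨w * v.1, hmul w hw v.1 v.2⟩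
          map_add' := by intro a b; ext; simp [mul_add]
          map_smul' := by intro r a; ext; simp [mul_smul_comm] }
      have hLinj : Function.Injective L := by
        intro a b hab
        have h' : w * a.1 = w * b.1 := congrArg Subtype.val hab
        exact Subtype.ext (mul_left_cancel₀ hw0 h')
      have hLsurj := (LinearMap.injective_iff_surjective_of_finrank_eq_finrank rfl).mp hLinj
      obtain ⟨v, hv⟩ := hLsurj ⟨1, h1V⟩
      have hv1 : w * v.1 = 1 := congrArg Subtype.val hv
      rw [inv_eq_of_mul_eq_one_right hv1]
      exact v.2
    have hVne : V ≠ ⊤ := by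
      intro htop
      apply hnc
      apply aux_span_comm (k := k) ?_ htop
      intro u hu v hv
      obtain ⟨i, rfl⟩ := hu
      obtain ⟨jj, rfl⟩ := hv
      have c0 : Commute x x := Commute.refl x
      fin_cases i <;> fin_cases jj <;>
        first
          | exact Commute.one_left _
          | exact Commute.one_right _
          | exact c0
          | exact c0.mul_right c0
          | exact c0.mul_left c0
          | exact (c0.mul_left c0).mul_right (c0.mul_left c0)
    have hy : ∃ y : F, y ∉ V := by
      by_contra hy
      push_neg at hy
      exact hVne (Submodule.eq_top_iff'.mpr hy)
    obtain ⟨y, hy⟩ := hy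
    have six : LinearIndependent k ![(1:F), x, x*x, y, x*y, (x*x)*y] := by
      rw [Fintype.linearIndependent_iff]
      intro g hg
      rw [Fin.sum_univ_six] at hg
      simp only [Matrix.cons_val_zero, Matrix.cons_val_one, Matrix.head_cons,
        Matrix.cons_val_two, Matrix.tail_cons, Matrix.cons_val_three,
        Matrix.cons_val_four, Matrix.cons_val_fin_one] at hg
      have key : (g 0 • (1:F) + g 1 • x + g 2 • (x*x)) +
          (g 3 • (1:F) + g 4 • x + g 5 • (x*x)) * y = 0 := by
        rw [add_mul, add_mul, smul_mul_assoc, smul_mul_assoc, smul_mul_assoc, one_mul]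
        rw [← hg]; abel
      set wv := g 0 • (1:F) + g 1 • x + g 2 • (x*x) with hwv
      set wu := g 3 • (1:F) + g 4 • x + g 5 • (x*x) with hwu
      rcases eq_or_ne wu 0 with h0 | h0
      · obtain ⟨h3', h4', h5'⟩ := ind3 _ _ _ h0
        rw [h0, zero_mul, add_zero] at key
        obtain ⟨h0', h1', h2'⟩ := ind3 _ _ _ key
        intro i; fin_cases i <;> assumption
      · exfalso
        apply hy
        have hyv : y = wu⁻¹ * (-wv) := by
          have h' : wu * y = -wv := by
            rw [eq_neg_iff_add_eq_zero, add_comm]; exact key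
          rw [← h', inv_mul_cancel_left₀ h0]
        rw [hyv]
        exact hmul _ (hinv wu (hcomb _ _ _) h0) _ (neg_mem (hcomb _ _ _))
    have hle := six.fintype_card_le_finrank
    rw [hdim, Fintype.card_fin] at hle
    omega
  · -- 1, x, x², x³ independent: F is spanned by powers of x, hence commutative
    push_neg at h3
    have ind4 : ∀ a b c d : k,
        a • (1:F) + b • x + c • (x*x) + d • (x*(x*x)) = 0 → a = 0 ∧ b = 0 ∧ c = 0 ∧ d = 0 := by
      intro a b c d h
      rcases eq_or_ne d 0 with hd | hd
      · subst hd
        rw [zero_smul, add_zero] at h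
        obtain ⟨h1, h2, h3'⟩ := ind3 _ _ _ h
        exact ⟨h1, h2, h3', rfl⟩
      · exfalso
        apply h3 (-a/d) (-b/d) (-c/d)
        have h1 : d • (x*(x*x)) = (-a) • (1:F) + (-b) • x + (-c) • (x*x) := by
          have h1 := eq_neg_of_add_eq_zero_right h
          rw [neg_add, neg_add, ← neg_smul, ← neg_smul, ← neg_smul] at h1
          rw [h1]
        calc x*(x*x) = (d⁻¹ * d) • (x*(x*x)) := by rw [inv_mul_cancel₀ hd, one_smul]
        _ = d⁻¹ • ((-a) • (1:F) + (-b) • x + (-c) • (x*x)) := by rw [mul_smul, h1]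
        _ = (d⁻¹ * -a) • (1:F) + (d⁻¹ * -b) • x + (d⁻¹ * -c) • (x*x) := by
            rw [smul_add, smul_add, smul_smul, smul_smul, smul_smul]
        _ = (-a/d) • (1:F) + (-b/d) • x + (-c/d) • (x*x) := by
            simp [div_eq_inv_mul]
    have li : LinearIndependent k ![(1:F), x, x*x, x*(x*x)] := by
      rw [Fintype.linearIndependent_iff]
      intro g hg
      rw [Fin.sum_univ_four] at hg
      simp only [Matrix.cons_val_zero, Matrix.cons_val_one, Matrix.head_cons,
        Matrix.cons_val_two, Matrix.tail_cons, Matrix.cons_val_three] at hg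
      obtain ⟨h0, h1, h2, h3'⟩ := ind4 _ _ _ _ hg
      intro i; fin_cases i <;> assumption
    have htop : Submodule.span k (Set.range ![(1:F), x, x*x, x*(x*x)]) = ⊤ := by
      apply Submodule.eq_top_of_finrank_eq
      rw [finrank_span_eq_card li, hdim, Fintype.card_fin]
    apply hnc
    apply aux_span_comm (k := k) ?_ htop
    intro u hu v hv
    obtain ⟨i, rfl⟩ := hu
    obtain ⟨jj, rfl⟩ := hv
    have c0 : Commute x x := Commute.refl x
    have hmem : ∀ l, Commute x (![(1:F), x, x*x, x*(x*x)] l) := by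
      intro l
      fin_cases l
      · exact Commute.one_right x
      · exact c0
      · exact c0.mul_right c0
      · exact c0.mul_right (c0.mul_right c0)
    fin_cases i
    · exact Commute.one_left _
    · exact hmem jj
    · exact (hmem jj).mul_left (hmem jj)
    · exact Commute.mul_left (hmem jj) ((hmem jj).mul_left (hmem jj))


end Aux2

/-- Let `k` be a field of characteristic `≠ 2` and `F` a division ring
with `k` in its centre and `dim_k F = 4`.  If `F` is not commutative, then the centre
of `F` is exactly `k` and `F` is a quaternion algebra `(a,b/k)` for some `a, b ∈ kˣ`. -/
theorem stmt12 {k : Type*} [Field k] (hchar : ringChar k ≠ 2)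
    (F : Type*) [DivisionRing F] [Algebra k F]
    (hdim : Module.finrank k F = 4)
    (hnc : ¬ ∀ s t : F, s * t = t * s) :
    Subring.center F = (algebraMap k F).range ∧
      ∃ a b : kˣ, Nonempty (F ≃ₐ[k] QuaternionAlgebra k (a : k) 0 (b : k)) := by
  classical
  have hFD : FiniteDimensional k F := Module.finite_of_finrank_eq_succ (n := 3) hdim
  have h2k : (2 : k) ≠ 0 := fun h =>
    hchar (((Nat.dvd_prime Nat.prime_two).mp
      (ringChar.dvd (by exact_mod_cast h))).resolve_left CharP.ringChar_ne_one)
  have hnc' := hnc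
  push_neg at hnc'
  obtain ⟨s, t, hst⟩ := hnc'
  have hxk : ∀ r : k, s ≠ algebraMap k F r := by
    intro r h
    exact hst (by rw [h, Algebra.commutes])
  obtain ⟨c, d, hquad⟩ := aux_quad hdim hnc hxk
  set e : F := (2:k) • s - c • (1:F) with he_def
  set a : k := 4*d + c*c with ha_def
  have he2 : e * e = a • (1:F) := by
    rw [he_def, ha_def]
    simp only [sub_mul, mul_sub, smul_mul_assoc, mul_smul_comm, one_mul, mul_one,
      smul_smul, smul_sub]
    rw [hquad]
    module
  have het : e * t ≠ t * e := by
    intro h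
    have hthis : e*t - t*e = (2:k)•(s*t - t*s) := by
      simp only [he_def, sub_mul, mul_sub, smul_mul_assoc, mul_smul_comm, one_mul, mul_one,
        smul_sub]
      module
    rw [h, sub_self] at hthis
    rcases aux_smul0 _ _ hthis.symm with h' | h'
    · exact h2k h'
    · exact hst (sub_eq_zero.mp h')
  have he0 : e ≠ 0 := by
    intro h
    exact het (by rw [h, zero_mul, mul_zero])
  have ha0 : a ≠ 0 := by
    intro h
    rw [h, zero_smul] at he2
    exact he0 (mul_self_eq_zero.mp he2)
  set j : F := t * e - e * t with hj_def
  have hj0 : j ≠ 0 := sub_ne_zero_of_ne (fun h => het h.symm)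
  have hkey : e*j + j*e = 0 := by
    have h1 : e*(t*e - e*t) + (t*e - e*t)*e = t*(e*e) - (e*e)*t := by noncomm_ring
    rw [hj_def, h1, he2, mul_smul_comm, smul_mul_assoc, mul_one, one_mul, sub_self]
  have hjanti : e*j = -(j*e) := by rw [eq_neg_iff_add_eq_zero]; exact hkey
  have hje : j*e = -(e*j) := by rw [eq_neg_iff_add_eq_zero, add_comm]; exact hkey
  have hej0 : e*j ≠ 0 := mul_ne_zero he0 hj0
  have heej : e*(e*j) = a • j := by rw [← mul_assoc, he2, smul_mul_assoc, one_mul]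
  have heje : (e*j)*e = -(a • j) := by rw [mul_assoc, hje, mul_neg, heej]
  -- Step 1: commuting with e kills the j and e*j coefficients
  have step1 : ∀ α β γ δ : k,
      e*(α•(1:F)+β•e+γ•j+δ•(e*j)) = (α•(1:F)+β•e+γ•j+δ•(e*j))*e → γ = 0 ∧ δ = 0 := by
    intro α β γ δ hcm
    have hid : e*(α•(1:F)+β•e+γ•j+δ•(e*j)) - (α•(1:F)+β•e+γ•j+δ•(e*j))*e
        = (2*γ)•(e*j) + (2*(a*δ))•j := by
      simp only [mul_add, add_mul, mul_smul_comm, smul_mul_assoc, one_mul, mul_one,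
        heej, heje, hje]
      module
    have hD : (2*γ)•(e*j) + (2*(a*δ))•j = 0 := by
      rw [← hid]
      exact sub_eq_zero_of_eq hcm
    have hfac : ((2*γ)•e + (2*(a*δ))•(1:F)) * j = 0 := by
      rw [add_mul, smul_mul_assoc, smul_mul_assoc, one_mul]
      exact hD
    have hsum : (2*γ)•e + (2*(a*δ))•(1:F) = 0 :=
      (mul_eq_zero.mp hfac).resolve_right hj0
    have hγ2 : 2*γ = 0 := by
      by_contra hg
      have heq := aux_alg (2*(a*δ)) (2*γ) e (by rw [add_comm]; exact hsum) hg
      exact het (by rw [heq, Algebra.commutes])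
    have hγ : γ = 0 := (mul_eq_zero.mp hγ2).resolve_left h2k
    have hδ2 : (2*(a*δ)) • (1:F) = 0 := by
      rw [hγ2, zero_smul, zero_add] at hsum
      exact hsum
    have hδ : δ = 0 := by
      rcases aux_smul0 _ _ hδ2 with h | h
      · rcases mul_eq_zero.mp h with h | h
        · exact absurd h h2k
        · exact (mul_eq_zero.mp h).resolve_left ha0
      · exact absurd h one_ne_zero
    exact ⟨hγ, hδ⟩
  -- Step 2: commuting with j kills the e coefficient
  have step2 : ∀ α β : k, j*(α•(1:F)+β•e) = (α•(1:F)+β•e)*j → β = 0 := by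
    intro α β hcm
    have hid : j*(α•(1:F)+β•e) - (α•(1:F)+β•e)*j = (-(2*β))•(e*j) := by
      simp only [mul_add, add_mul, mul_smul_comm, smul_mul_assoc, one_mul, mul_one, hje]
      module
    have hD : (-(2*β))•(e*j) = 0 := by rw [← hid]; exact sub_eq_zero_of_eq hcm
    rcases aux_smul0 _ _ hD with h | h
    · have h2 : 2*β = 0 := by
        have := neg_eq_zero.mp h
        exact this
      exact (mul_eq_zero.mp h2).resolve_left h2k
    · exact absurd h hej0
  -- linear independence of 1, e, j, e*j
  have indep4 : ∀ α β γ δ : k, α•(1:F)+β•e+γ•j+δ•(e*j) = 0 → α = 0 ∧ β = 0 ∧ γ = 0 ∧ δ = 0 := by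
    intro α β γ δ h
    obtain ⟨hγ, hδ⟩ := step1 α β γ δ (by rw [h, mul_zero, zero_mul])
    rw [hγ, hδ, zero_smul, zero_smul, add_zero, add_zero] at h
    have hβ : β = 0 := by
      by_contra hb
      have heq := aux_alg α β e h hb
      exact het (by rw [heq, Algebra.commutes])
    rw [hβ, zero_smul, add_zero] at h
    have hα : α = 0 := by
      rcases aux_smul0 _ _ h with h' | h'
      · exact h'
      · exact absurd h' one_ne_zero
    exact ⟨hα, hβ, hγ, hδ⟩
  have li4 : LinearIndependent k ![(1:F), e, j, e*j] := by
    rw [Fintype.linearIndependent_iff]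
    intro g hg
    rw [Fin.sum_univ_four] at hg
    simp only [Matrix.cons_val_zero, Matrix.cons_val_one, Matrix.head_cons,
      Matrix.cons_val_two, Matrix.tail_cons, Matrix.cons_val_three] at hg
    obtain ⟨h0, h1, h2, h3⟩ := indep4 _ _ _ _ hg
    intro i; fin_cases i <;> assumption
  have htop4 : Submodule.span k (Set.range ![(1:F), e, j, e*j]) = ⊤ := by
    apply Submodule.eq_top_of_finrank_eq
    rw [finrank_span_eq_card li4, hdim, Fintype.card_fin]
  have hrep : ∀ z : F, ∃ α β γ δ : k, z = α•(1:F)+β•e+γ•j+δ•(e*j) := by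
    intro z
    have hz : z ∈ Submodule.span k (Set.range ![(1:F), e, j, e*j]) := by
      rw [htop4]; exact Submodule.mem_top
    rw [Submodule.mem_span_range_iff_exists_fun] at hz
    obtain ⟨g, hg⟩ := hz
    refine ⟨g 0, g 1, g 2, g 3, ?_⟩
    rw [← hg, Fin.sum_univ_four]
    simp only [Matrix.cons_val_zero, Matrix.cons_val_one, Matrix.head_cons,
      Matrix.cons_val_two, Matrix.tail_cons, Matrix.cons_val_three]
  -- j*j is a nonzero scalar
  have hjje : e*(j*j) = (j*j)*e := by
    calc e*(j*j) = (e*j)*j := by rw [mul_assoc]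
    _ = -((j*e)*j) := by rw [hjanti, neg_mul]
    _ = -(j*(e*j)) := by rw [mul_assoc]
    _ = j*(j*e) := by rw [← mul_neg, ← hje]
    _ = (j*j)*e := by rw [mul_assoc]
  obtain ⟨α, β, γ, δ, hjj⟩ := hrep (j*j)
  obtain ⟨hγ, hδ⟩ := step1 α β γ δ (by rw [← hjj]; exact hjje)
  rw [hγ, hδ, zero_smul, zero_smul, add_zero, add_zero] at hjj
  have hβ : β = 0 := step2 α β (by rw [← hjj]; exact (mul_assoc j j j).symm)
  rw [hβ, zero_smul, add_zero] at hjj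
  set b : k := α with hb_def
  have hb2 : j * j = b • (1:F) := hjj
  have hb0 : b ≠ 0 := by
    intro h
    rw [h, zero_smul] at hb2
    exact mul_ne_zero hj0 hj0 hb2
  -- the quaternion basis and the algebra isomorphism
  let Q : QuaternionAlgebra.Basis F a 0 b :=
    { i := e, j := j, k := e*j
      i_mul_i := by rw [zero_smul, add_zero]; exact he2
      j_mul_j := hb2
      i_mul_j := rfl
      j_mul_i := by rw [zero_smul, zero_sub]; exact hje }
  let f : QuaternionAlgebra k a 0 b →ₐ[k] F := Q.liftHom
  have hfval : ∀ q : QuaternionAlgebra k a 0 b,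
      f q = q.re•(1:F) + q.imI•e + q.imJ•j + q.imK•(e*j) := by
    intro q
    show Q.lift q = _
    rw [QuaternionAlgebra.Basis.lift, Algebra.algebraMap_eq_smul_one]
  have hsurj : Function.Surjective f := by
    intro z
    obtain ⟨α', β', γ', δ', hz⟩ := hrep z
    exact ⟨⟨α', β', γ', δ'⟩, by rw [hfval]; exact hz.symm⟩
  have hinj : Function.Injective f := by
    have hfr : Module.finrank k (QuaternionAlgebra k a 0 b) = Module.finrank k F := by
      rw [QuaternionAlgebra.finrank_eq_four, hdim]
    have h' : Function.Surjective (AlgHom.toLinearMap f) := hsurj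
    exact (LinearMap.injective_iff_surjective_of_finrank_eq_finrank hfr).mpr h'
  have equiv : F ≃ₐ[k] QuaternionAlgebra k a 0 b :=
    (AlgEquiv.ofBijective f ⟨hinj, hsurj⟩).symm
  constructor
  · ext z
    simp only [Subring.mem_center_iff, RingHom.mem_range]
    constructor
    · intro hzc
      obtain ⟨α', β', γ', δ', hz⟩ := hrep z
      obtain ⟨hγ', hδ'⟩ := step1 α' β' γ' δ' (by rw [← hz]; exact hzc e)
      rw [hγ', hδ', zero_smul, zero_smul, add_zero, add_zero] at hz
      have hβ' : β' = 0 := step2 α' β' (by rw [← hz]; exact hzc j)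
      rw [hβ', zero_smul, add_zero] at hz
      exact ⟨α', by rw [Algebra.algebraMap_eq_smul_one, hz]⟩
    · rintro ⟨r, rfl⟩ g
      exact (Algebra.commutes r g).symm
  · exact ⟨Units.mk0 a ha0, Units.mk0 b hb0, ⟨equiv⟩⟩
end
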